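/- Chapman–Kolmogorov recursion for the empirical CDF: with R(s,m) = P(∀t∈[0,s]: g(t) < n·F̂_n(t) < h(t) and n·F̂_n(s) = m), for times t_i < t_{i+1} in [0,1), if g(t_{i+1}) < m < h(t_{i+1}) then R(t_{i+1}, m) = ∑_{ℓ: g(t_i) < ℓ ≤ m} R(t_i, ℓ)·P(Z_{ℓ,i} = m−ℓ), where Z_{ℓ,i} ~ Binomial(n−ℓ, (t_{i+1}−t_i)/(1−t_i)); and R(t_{i+1},m) = 0 otherwise. -/

import Mathlib

open MeasureTheory ProbabilityTheory Set

set_option linter.unusedSectionVars false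
set_option linter.unusedVariables false
set_option maxHeartbeats 1000000

/-- count of coordinates `≤ u` -/
noncomputable def ecnt {ι : Type*} [Fintype ι] (y : ι → ℝ) (u : ℝ) : ℕ :=
  (Finset.univ.filter fun i => y i ≤ u).card

lemma ecnt_mono {ι : Type*} [Fintype ι] (y : ι → ℝ) {u v : ℝ} (huv : u ≤ v) :
    ecnt y u ≤ ecnt y v :=
  Finset.card_le_card (fun i hi => by
    simp only [Finset.mem_filter] at *; exact ⟨hi.1, hi.2.trans huv⟩)

lemma ecnt_congr {ι : Type*} [Fintype ι] (y : ι → ℝ) {u v : ℝ}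
    (hmem : ∀ i, y i ≤ u ↔ y i ≤ v) : ecnt y u = ecnt y v := by
  unfold ecnt; congr 1; ext i; simp [hmem i]

lemma measurable_ecnt {ι : Type*} [Fintype ι] (u : ℝ) :
    Measurable fun y : ι → ℝ => ecnt y u := by
  unfold ecnt
  simp_rw [Finset.card_filter]
  exact Finset.measurable_sum _ (fun i _ =>
    Measurable.ite (measurableSet_le (measurable_pi_apply i) measurable_const)
      measurable_const measurable_const)

lemma measurable_ecnt_apply {ι : Type*} [Fintype ι] (i : ι) :
    Measurable fun y : ι → ℝ => ecnt y (y i) := by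
  unfold ecnt
  simp_rw [Finset.card_filter]
  exact Finset.measurable_sum _ (fun j _ =>
    Measurable.ite (measurableSet_le (measurable_pi_apply j) (measurable_pi_apply i))
      measurable_const measurable_const)

/-- the non-crossing condition on `[0, r]` -/
def NC (g h : ℝ → ℝ) (r : ℝ) {ι : Type*} [Fintype ι] (y : ι → ℝ) : Prop :=
  ∀ u ∈ Icc (0:ℝ) r, g u < (ecnt y u : ℝ) ∧ (ecnt y u : ℝ) < h u

lemma NC_iff {ι : Type*} [Fintype ι] (g h : ℝ → ℝ) (hg : Monotone g) (hh : Monotone h)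
    {r : ℝ} (hr : 0 ≤ r) (y : ι → ℝ) :
    NC g h r y ↔
      ((∀ q : ℚ, 0 ≤ (q:ℝ) → (q:ℝ) ≤ r → g q < (ecnt y q : ℝ)) ∧
       g r < (ecnt y r : ℝ)) ∧
      ((ecnt y 0 : ℝ) < h 0 ∧
       ∀ i, 0 ≤ y i → y i ≤ r → (ecnt y (y i) : ℝ) < h (y i)) := by
  constructor
  · intro H
    refine ⟨⟨fun q hq0 hqr => (H q ⟨hq0, hqr⟩).1, (H r ⟨hr, le_refl r⟩).1⟩,
      (H 0 ⟨le_refl 0, hr⟩).2, fun i h0i hir => (H (y i) ⟨h0i, hir⟩).2⟩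
  · rintro ⟨⟨hgq, hgr⟩, hh0, hhi⟩ u ⟨hu0, hur⟩
    constructor
    · -- g part
      rcases eq_or_lt_of_le hur with rfl | hur'
      · exact hgr
      · -- find rational q ∈ (u, m0)
        set F : Finset ℝ := (Finset.univ.filter fun i => u < y i).image y with hF
        set G : Finset ℝ := insert r F with hG
        have hGne : G.Nonempty := ⟨r, Finset.mem_insert_self _ _⟩
        have hum : u < G.min' hGne := by
          rw [Finset.lt_min'_iff]
          intro b hb
          rcases Finset.mem_insert.1 hb with rfl | hbF
          · exact hur'
          · rcases Finset.mem_image.1 hbF with ⟨i, hi, rfl⟩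
            exact (Finset.mem_filter.1 hi).2
        obtain ⟨q, hq1, hq2⟩ := exists_rat_btwn hum
        have hqr : (q:ℝ) ≤ r := le_of_lt (lt_of_lt_of_le hq2
          (Finset.min'_le _ _ (Finset.mem_insert_self _ _)))
        have hcnt : ecnt y (q:ℝ) = ecnt y u := by
          apply ecnt_congr
          intro i
          constructor
          · intro hiq
            by_contra hiu
            push_neg at hiu
            have : y i ∈ G := Finset.mem_insert_of_mem
              (Finset.mem_image_of_mem y (Finset.mem_filter.2 ⟨Finset.mem_univ i, hiu⟩))
            exact absurd (lt_of_le_of_lt hiq hq2) (not_lt.2 (Finset.min'_le _ _ this))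
          · intro hiu; exact hiu.trans (le_of_lt hq1)
        calc g u ≤ g q := hg (le_of_lt hq1)
        _ < (ecnt y (q:ℝ) : ℝ) := hgq q (hu0.trans (le_of_lt hq1)) hqr
        _ = (ecnt y u : ℝ) := by rw [hcnt]
    · -- h part
      set G : Finset ι := Finset.univ.filter (fun i => 0 ≤ y i ∧ y i ≤ u) with hG
      rcases Finset.eq_empty_or_nonempty G with hGe | hGne
      · have hcnt : ecnt y u = ecnt y 0 := by
          apply ecnt_congr
          intro i
          constructor
          · intro hiu
            by_contra hi0
            push_neg at hi0
            have : i ∈ G := Finset.mem_filter.2 ⟨Finset.mem_univ i, le_of_lt hi0, hiu⟩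
            simp [hGe] at this
          · intro hi0; exact hi0.trans hu0
        calc ((ecnt y u : ℝ)) = (ecnt y 0 : ℝ) := by rw [hcnt]
        _ < h 0 := hh0
        _ ≤ h u := hh hu0
      · obtain ⟨i0, hi0G, hi0⟩ := Finset.exists_mem_eq_sup' hGne y
        have hi0mem := Finset.mem_filter.1 hi0G
        have hvu : y i0 ≤ u := hi0mem.2.2
        have hcnt : ecnt y u = ecnt y (y i0) := by
          apply ecnt_congr
          intro i
          constructor
          · intro hiu
            rcases le_or_gt 0 (y i) with h0i | h0i
            · have : i ∈ G := Finset.mem_filter.2 ⟨Finset.mem_univ i, h0i, hiu⟩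
              exact hi0 ▸ Finset.le_sup' y this
            · exact (le_of_lt h0i).trans hi0mem.2.1
          · intro hiv; exact hiv.trans hvu
        calc ((ecnt y u : ℝ)) = (ecnt y (y i0) : ℝ) := by rw [hcnt]
        _ < h (y i0) := hhi i0 hi0mem.2.1 (hvu.trans hur)
        _ ≤ h u := hh hvu

lemma measurableSet_NC {ι : Type*} [Fintype ι] (g h : ℝ → ℝ) (hg : Monotone g)
    (hh : Monotone h) {r : ℝ} (hr : 0 ≤ r) :
    MeasurableSet {y : ι → ℝ | NC g h r y} := by
  have : {y : ι → ℝ | NC g h r y} =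
      ((⋂ q : ℚ, {y : ι → ℝ | 0 ≤ (q:ℝ) → (q:ℝ) ≤ r → g q < (ecnt y q : ℝ)}) ∩
        {y | g r < (ecnt y r : ℝ)}) ∩
      ({y | (ecnt y 0 : ℝ) < h 0} ∩
        ⋂ i : ι, {y | 0 ≤ y i → y i ≤ r → (ecnt y (y i) : ℝ) < h (y i)}) := by
    ext y
    simp only [mem_inter_iff, mem_iInter, mem_setOf_eq]
    rw [NC_iff g h hg hh hr]
  rw [this]
  have hcast : ∀ c : ℝ, Measurable fun y : ι → ℝ => (ecnt y c : ℝ) :=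
    fun c => Measurable.comp measurable_from_top (measurable_ecnt c)
  refine MeasurableSet.inter (MeasurableSet.inter ?_ ?_) (MeasurableSet.inter ?_ ?_)
  · refine MeasurableSet.iInter fun q => ?_
    by_cases hq : 0 ≤ (q:ℝ) ∧ (q:ℝ) ≤ r
    · have : {y : ι → ℝ | 0 ≤ (q:ℝ) → (q:ℝ) ≤ r → g q < (ecnt y q : ℝ)} =
        {y | g q < (ecnt y q : ℝ)} := by ext y; simp [hq.1, hq.2]
      rw [this]
      exact measurableSet_lt measurable_const (hcast q)
    · have : {y : ι → ℝ | 0 ≤ (q:ℝ) → (q:ℝ) ≤ r → g q < (ecnt y q : ℝ)} = univ := by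
        ext y; simp only [mem_setOf_eq, mem_univ, iff_true]
        intro h1 h2; exact absurd ⟨h1, h2⟩ hq
      rw [this]; exact MeasurableSet.univ
  · exact measurableSet_lt measurable_const (hcast r)
  · exact measurableSet_lt (hcast 0) measurable_const
  · refine MeasurableSet.iInter fun i => ?_
    have : {y : ι → ℝ | 0 ≤ y i → y i ≤ r → (ecnt y (y i) : ℝ) < h (y i)} =
        {y : ι → ℝ | y i < 0} ∪ {y | r < y i} ∪
          {y | (ecnt y (y i) : ℝ) < h (y i)} := by
      ext y
      simp only [mem_setOf_eq, mem_union]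
      constructor
      · intro H
        rcases lt_or_ge (y i) 0 with h1 | h1
        · exact Or.inl (Or.inl h1)
        rcases lt_or_ge r (y i) with h2 | h2
        · exact Or.inl (Or.inr h2)
        · exact Or.inr (H h1 h2)
      · rintro ((h1 | h1) | h1) h2 h3
        · exact absurd h2 (not_le.2 h1)
        · exact absurd h3 (not_le.2 h1)
        · exact h1
    rw [this]
    refine MeasurableSet.union (MeasurableSet.union ?_ ?_) ?_
    · exact measurableSet_lt (measurable_pi_apply i) measurable_const
    · exact measurableSet_lt measurable_const (measurable_pi_apply i)
    · exact measurableSet_lt ((measurable_from_top).comp (measurable_ecnt_apply i))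
        ((hh.measurable).comp (measurable_pi_apply i))
section Main
variable {Ω : Type*} [MeasureSpace Ω] [IsProbabilityMeasure (ℙ : Measure Ω)]
  {n : ℕ} {X : Fin n → Ω → ℝ}

/-- event: the indices in `S` all fall in `[.., s]` and their running count stays
between `g` and `h` on `[0,s]`. -/
def CSet (X : Fin n → Ω → ℝ) (g h : ℝ → ℝ) (s : ℝ) (S : Finset (Fin n)) : Set Ω :=
  {ω | NC g h s (fun i : {i // i ∈ S} => X i ω) ∧ ∀ i : {i // i ∈ S}, X i ω ≤ s}

lemma measurableSet_CSet (hXmeas : ∀ i, Measurable (X i)) {g h : ℝ → ℝ}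
    (hg : Monotone g) (hh : Monotone h) {s : ℝ} (hs : 0 ≤ s) (S : Finset (Fin n)) :
    MeasurableSet (CSet X g h s S) := by
  have hmap : Measurable fun ω (i : {i // i ∈ S}) => X i ω :=
    measurable_pi_lambda _ fun i => hXmeas i
  have : CSet X g h s S = (fun ω (i : {i // i ∈ S}) => X i ω) ⁻¹'
      {y | NC g h s y ∧ ∀ i, y i ≤ s} := rfl
  rw [this]
  refine hmap ?_
  have h2 : MeasurableSet {y : {i // i ∈ S} → ℝ | ∀ i, y i ≤ s} := by
    rw [Set.setOf_forall]
    exact MeasurableSet.iInter fun i =>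
      measurableSet_le (measurable_pi_apply i) measurable_const
  exact (measurableSet_NC g h hg hh hs).inter h2

lemma CSet_indep (hXmeas : ∀ i, Measurable (X i))
    (hXindep : iIndepFun X ℙ) {g h : ℝ → ℝ}
    (hg : Monotone g) (hh : Monotone h) {s : ℝ} (hs : 0 ≤ s) (S : Finset (Fin n))
    (A : Fin n → Set ℝ) (hA : ∀ i, MeasurableSet (A i)) :
    ℙ (CSet X g h s S ∩ ⋂ i ∈ Sᶜ, X i ⁻¹' A i) =
      ℙ (CSet X g h s S) * ∏ i ∈ Sᶜ, ℙ (X i ⁻¹' A i) := by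
  have hB : MeasurableSet {y : {i // i ∈ S} → ℝ | NC g h s y ∧ ∀ i, y i ≤ s} := by
    have h2 : MeasurableSet {y : {i // i ∈ S} → ℝ | ∀ i, y i ≤ s} := by
      rw [Set.setOf_forall]
      exact MeasurableSet.iInter fun i =>
        measurableSet_le (measurable_pi_apply i) measurable_const
    exact (measurableSet_NC g h hg hh hs).inter h2
  have hD : (⋂ i ∈ Sᶜ, X i ⁻¹' A i) = (fun ω (i : {i // i ∈ Sᶜ}) => X i ω) ⁻¹'
      (Set.pi Set.univ fun i : {i // i ∈ Sᶜ} => A i) := by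
    ext ω
    simp only [Set.mem_iInter, Set.mem_preimage, Set.mem_pi, Set.mem_univ, true_implies]
    exact ⟨fun H i => H i i.2, fun H i hi => H ⟨i, hi⟩⟩
  have hIndep := hXindep.indepFun_finset S Sᶜ disjoint_compl_right hXmeas
  have h1 : CSet X g h s S = (fun ω (i : {i // i ∈ S}) => X i ω) ⁻¹'
      {y | NC g h s y ∧ ∀ i, y i ≤ s} := rfl
  rw [hD, h1, hIndep.measure_inter_preimage_eq_mul _ _ hB
      (MeasurableSet.univ_pi fun i => hA i)]
  congr 1
  rw [← hD]
  exact hXindep.measure_inter_preimage_eq_mul Sᶜ (fun i _ => hA i)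

lemma prob_preimage (hXmeas : ∀ i, Measurable (X i))
    (hXunif : ∀ i, Measure.map (X i) ℙ = (volume : Measure ℝ).restrict (Set.Icc 0 1))
    (i : Fin n) {A : Set ℝ} (hA : MeasurableSet A) :
    ℙ (X i ⁻¹' A) = volume (A ∩ Set.Icc (0:ℝ) 1) := by
  rw [← Measure.map_apply (hXmeas i) hA, hXunif i, Measure.restrict_apply hA]

lemma prob_Ioi (hXmeas : ∀ i, Measurable (X i))
    (hXunif : ∀ i, Measure.map (X i) ℙ = (volume : Measure ℝ).restrict (Set.Icc 0 1))
    (i : Fin n) {c : ℝ} (hc0 : 0 ≤ c) (hc1 : c ≤ 1) :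
    ℙ (X i ⁻¹' Set.Ioi c) = ENNReal.ofReal (1 - c) := by
  rw [prob_preimage hXmeas hXunif i measurableSet_Ioi]
  have : Set.Ioi c ∩ Set.Icc (0:ℝ) 1 = Set.Ioc c 1 := by
    ext x
    simp only [Set.mem_inter_iff, Set.mem_Ioi, Set.mem_Icc, Set.mem_Ioc]
    exact ⟨fun ⟨h1, _, h3⟩ => ⟨h1, h3⟩, fun ⟨h1, h2⟩ => ⟨h1, le_trans hc0 (le_of_lt h1), h2⟩⟩
  rw [this, Real.volume_Ioc]

lemma prob_Ioc (hXmeas : ∀ i, Measurable (X i))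
    (hXunif : ∀ i, Measure.map (X i) ℙ = (volume : Measure ℝ).restrict (Set.Icc 0 1))
    (i : Fin n) {a b : ℝ} (ha : 0 ≤ a) (hb : b ≤ 1) :
    ℙ (X i ⁻¹' Set.Ioc a b) = ENNReal.ofReal (b - a) := by
  rw [prob_preimage hXmeas hXunif i measurableSet_Ioc]
  have : Set.Ioc a b ∩ Set.Icc (0:ℝ) 1 = Set.Ioc a b := by
    apply Set.inter_eq_self_of_subset_left
    intro x hx
    exact ⟨le_trans ha (le_of_lt hx.1), le_trans hx.2 hb⟩
  rw [this, Real.volume_Ioc]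

end Main
lemma ecnt_subtype {k : ℕ} (y : Fin k → ℝ) (S : Finset (Fin k)) (u : ℝ)
    (hsub : ∀ i, y i ≤ u → i ∈ S) :
    ecnt y u = ecnt (fun i : {i // i ∈ S} => y i) u := by
  unfold ecnt
  refine Finset.card_bij' (fun a ha => ⟨a, hsub a (Finset.mem_filter.1 ha).2⟩)
    (fun b _ => (b : Fin k)) ?_ ?_ ?_ ?_
  · intro a ha
    simp only [Finset.mem_filter, Finset.mem_univ, true_and]
    exact (Finset.mem_filter.1 ha).2
  · intro b hb
    simp only [Finset.mem_filter, Finset.mem_univ, true_and]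
    exact (Finset.mem_filter.1 hb).2
  · intro a ha; rfl
  · intro b hb; rfl

lemma NC_subtype (g h : ℝ → ℝ) {s : ℝ} {k : ℕ} (y : Fin k → ℝ) (S : Finset (Fin k))
    (hS : ∀ i, y i ≤ s → i ∈ S) :
    NC g h s y ↔ NC g h s (fun i : {i // i ∈ S} => y i) := by
  have key : ∀ u ∈ Set.Icc (0:ℝ) s, ecnt y u = ecnt (fun i : {i // i ∈ S} => y i) u :=
    fun u hu => ecnt_subtype y S u (fun i hi => hS i (le_trans hi hu.2))
  constructor
  · intro H u hu; rw [← key u hu]; exact H u hu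
  · intro H u hu; rw [key u hu]; exact H u hu

section Main2
variable {Ω : Type*} [MeasureSpace Ω] [IsProbabilityMeasure (ℙ : Measure Ω)]
  {n : ℕ} {X : Fin n → Ω → ℝ}

/-- event for `R r m` -/
def ESet (X : Fin n → Ω → ℝ) (g h : ℝ → ℝ) (r : ℝ) (m : ℕ) : Set Ω :=
  {ω | NC g h r (fun i => X i ω) ∧ ecnt (fun i => X i ω) r = m}

lemma spec1 {g h : ℝ → ℝ} {s : ℝ} (S : Finset (Fin n)) {A : Fin n → Set ℝ}
    (hA : ∀ i, A i ⊆ Set.Ioi s) {ω : Ω}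
    (hω : ω ∈ CSet X g h s S ∩ ⋂ i ∈ Sᶜ, X i ⁻¹' A i) :
    ∀ i, i ∈ S ↔ X i ω ≤ s := by
  intro i
  constructor
  · intro hi; exact hω.1.2 ⟨i, hi⟩
  · intro hle
    by_contra hi
    have : X i ω ∈ A i := Set.mem_iInter₂.1 hω.2 i (Finset.mem_compl.2 hi)
    exact absurd hle (not_le.2 (hA i this))

lemma ESet_eq_biUnion {g h : ℝ → ℝ} {s : ℝ} (ℓ : ℕ) :
    ESet X g h s ℓ = ⋃ S ∈ Finset.powersetCard ℓ (Finset.univ : Finset (Fin n)),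
      (CSet X g h s S ∩ ⋂ i ∈ Sᶜ, X i ⁻¹' Set.Ioi s) := by
  ext ω
  simp only [Set.mem_iUnion, exists_prop]
  constructor
  · rintro ⟨hNC, hcard⟩
    set S : Finset (Fin n) := Finset.univ.filter fun i => X i ω ≤ s with hSdef
    have hSmem : ∀ i, i ∈ S ↔ X i ω ≤ s := by
      intro i; simp [hSdef]
    refine ⟨S, ?_, ⟨?_, ?_⟩, ?_⟩
    · rw [Finset.mem_powersetCard]
      exact ⟨Finset.subset_univ S, hcard⟩
    · exact (NC_subtype g h _ S (fun i hi => (hSmem i).2 hi)).1 hNC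
    · exact fun i => (hSmem i.1).1 i.2
    · refine Set.mem_iInter₂.2 fun i hi => ?_
      exact not_le.1 (fun hle => (Finset.mem_compl.1 hi) ((hSmem i).2 hle))
  · rintro ⟨S, hSc, hω⟩
    have hSmem : ∀ i, i ∈ S ↔ X i ω ≤ s :=
      spec1 S (fun i => Set.Subset.refl _) hω
    have hfilter : (Finset.univ.filter fun i => X i ω ≤ s) = S := by
      ext i
      simp [hSmem i]
    constructor
    · exact (NC_subtype g h _ S (fun i hi => (hSmem i).2 hi)).2 hω.1.1
    · show ecnt (fun i => X i ω) s = ℓ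
      unfold ecnt
      rw [hfilter]
      exact (Finset.mem_powersetCard.1 hSc).2

end Main2
section Main3
variable {Ω : Type*} [MeasureSpace Ω] [IsProbabilityMeasure (ℙ : Measure Ω)]
  {n : ℕ} {X : Fin n → Ω → ℝ}

lemma E2_eq_biUnion {g h : ℝ → ℝ} {s t : ℝ} (hst : s < t) {ℓ m : ℕ} (hℓm : ℓ ≤ m) :
    {ω | NC g h s (fun i => X i ω) ∧ ecnt (fun i => X i ω) s = ℓ ∧
        ecnt (fun i => X i ω) t = m} =
      ⋃ S ∈ Finset.powersetCard ℓ (Finset.univ : Finset (Fin n)),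
        ⋃ U ∈ Finset.powersetCard (m - ℓ) Sᶜ,
          (CSet X g h s S ∩
            ⋂ i ∈ Sᶜ, X i ⁻¹' (if i ∈ U then Set.Ioc s t else Set.Ioi t)) := by
  have hAsub : ∀ (U : Finset (Fin n)) i,
      (if i ∈ U then Set.Ioc s t else Set.Ioi t) ⊆ Set.Ioi s := by
    intro U i x hx
    by_cases hiU : i ∈ U
    · rw [if_pos hiU] at hx; exact hx.1
    · rw [if_neg hiU] at hx; exact lt_trans hst hx
  ext ω
  simp only [Set.mem_iUnion, exists_prop, Set.mem_setOf_eq]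
  constructor
  · rintro ⟨hNC, hcs, hct⟩
    set S : Finset (Fin n) := Finset.univ.filter fun i => X i ω ≤ s with hSdef
    set U : Finset (Fin n) := Finset.univ.filter fun i => s < X i ω ∧ X i ω ≤ t with hUdef
    have hSmem : ∀ i, i ∈ S ↔ X i ω ≤ s := by intro i; simp [hSdef]
    have hUmem : ∀ i, i ∈ U ↔ (s < X i ω ∧ X i ω ≤ t) := by intro i; simp [hUdef]
    have hUsub : U ⊆ Sᶜ := by
      intro i hi
      exact Finset.mem_compl.2 fun hiS => absurd ((hSmem i).1 hiS)
        (not_le.2 ((hUmem i).1 hi).1)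
    have hcardS : S.card = ℓ := hcs
    have hsplit : (Finset.univ.filter fun i => X i ω ≤ t) = S ∪ U := by
      ext i
      simp only [Finset.mem_filter, Finset.mem_univ, true_and, Finset.mem_union,
        hSmem i, hUmem i]
      constructor
      · intro hit
        rcases le_or_gt (X i ω) s with hle | hlt
        · exact Or.inl hle
        · exact Or.inr ⟨hlt, hit⟩
      · rintro (hle | ⟨_, hle⟩)
        · exact hle.trans (le_of_lt hst)
        · exact hle
    have hdisj : Disjoint S U := by
      rw [Finset.disjoint_left]
      intro i hiS hiU
      exact absurd ((hSmem i).1 hiS) (not_le.2 ((hUmem i).1 hiU).1)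
    have hcardU : U.card = m - ℓ := by
      have : m = S.card + U.card := by
        rw [← Finset.card_union_of_disjoint hdisj, ← hsplit]
        exact hct.symm
      omega
    refine ⟨S, ?_, U, ?_, ⟨?_, ?_⟩, ?_⟩
    · rw [Finset.mem_powersetCard]; exact ⟨Finset.subset_univ S, hcardS⟩
    · rw [Finset.mem_powersetCard]; exact ⟨hUsub, hcardU⟩
    · exact (NC_subtype g h _ S (fun i hi => (hSmem i).2 hi)).1 hNC
    · exact fun i => (hSmem i.1).1 i.2
    · refine Set.mem_iInter₂.2 fun i hi => ?_
      have hiS : ¬ X i ω ≤ s := fun hle => (Finset.mem_compl.1 hi) ((hSmem i).2 hle)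
      by_cases hiU : i ∈ U
      · rw [Set.mem_preimage, if_pos hiU]
        exact ((hUmem i).1 hiU)
      · rw [Set.mem_preimage, if_neg hiU]
        rcases le_or_gt (X i ω) t with hle | hlt
        · exact absurd ((hUmem i).2 ⟨not_le.1 hiS, hle⟩) hiU
        · exact hlt
  · rintro ⟨S, hSc, U, hUc, hω⟩
    have hUsub : U ⊆ Sᶜ := (Finset.mem_powersetCard.1 hUc).1
    have hSmem : ∀ i, i ∈ S ↔ X i ω ≤ s := spec1 S (hAsub U) hω
    have hUmem : ∀ i, i ∈ U ↔ (s < X i ω ∧ X i ω ≤ t) := by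
      intro i
      constructor
      · intro hiU
        have := Set.mem_iInter₂.1 hω.2 i (hUsub hiU)
        rw [Set.mem_preimage, if_pos hiU] at this
        exact this
      · rintro ⟨hgt, hle⟩
        by_contra hiU
        have hiSc : i ∈ Sᶜ := Finset.mem_compl.2 fun hiS =>
          absurd ((hSmem i).1 hiS) (not_le.2 hgt)
        have := Set.mem_iInter₂.1 hω.2 i hiSc
        rw [Set.mem_preimage, if_neg hiU] at this
        exact absurd hle (not_le.2 this)
    have hdisj : Disjoint S U := by
      rw [Finset.disjoint_left]
      intro i hiS hiU
      exact absurd ((hSmem i).1 hiS) (not_le.2 ((hUmem i).1 hiU).1)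
    refine ⟨(NC_subtype g h _ S (fun i hi => (hSmem i).2 hi)).2 hω.1.1, ?_, ?_⟩
    · show ecnt (fun i => X i ω) s = ℓ
      unfold ecnt
      have : (Finset.univ.filter fun i => X i ω ≤ s) = S := by
        ext i; simp [hSmem i]
      rw [this]
      exact (Finset.mem_powersetCard.1 hSc).2
    · show ecnt (fun i => X i ω) t = m
      unfold ecnt
      have : (Finset.univ.filter fun i => X i ω ≤ t) = S ∪ U := by
        ext i
        simp only [Finset.mem_filter, Finset.mem_univ, true_and, Finset.mem_union,
          hSmem i, hUmem i]
        constructor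
        · intro hit
          rcases le_or_gt (X i ω) s with hle | hlt
          · exact Or.inl hle
          · exact Or.inr ⟨hlt, hit⟩
        · rintro (hle | ⟨_, hle⟩)
          · exact hle.trans (le_of_lt hst)
          · exact hle
      rw [this, Finset.card_union_of_disjoint hdisj,
        (Finset.mem_powersetCard.1 hSc).2, (Finset.mem_powersetCard.1 hUc).2]
      omega

lemma measure_piece1 (hXmeas : ∀ i, Measurable (X i))
    (hXindep : iIndepFun X ℙ)
    (hXunif : ∀ i, Measure.map (X i) ℙ = (volume : Measure ℝ).restrict (Set.Icc 0 1))
    {g h : ℝ → ℝ} (hg : Monotone g) (hh : Monotone h) {s : ℝ} (hs : 0 ≤ s)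
    (hs1 : s ≤ 1) {ℓ : ℕ} {S : Finset (Fin n)}
    (hSc : S ∈ Finset.powersetCard ℓ (Finset.univ : Finset (Fin n))) :
    ℙ (CSet X g h s S ∩ ⋂ i ∈ Sᶜ, X i ⁻¹' Set.Ioi s) =
      ℙ (CSet X g h s S) * ENNReal.ofReal (1 - s) ^ (n - ℓ) := by
  rw [CSet_indep hXmeas hXindep hg hh hs S _ (fun i => measurableSet_Ioi)]
  congr 1
  have hcard : Sᶜ.card = n - ℓ := by
    rw [Finset.card_compl, (Finset.mem_powersetCard.1 hSc).2, Fintype.card_fin]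
  rw [Finset.prod_congr rfl (fun i _ => prob_Ioi hXmeas hXunif i hs hs1),
    Finset.prod_const, hcard]

lemma measure_piece2 (hXmeas : ∀ i, Measurable (X i))
    (hXindep : iIndepFun X ℙ)
    (hXunif : ∀ i, Measure.map (X i) ℙ = (volume : Measure ℝ).restrict (Set.Icc 0 1))
    {g h : ℝ → ℝ} (hg : Monotone g) (hh : Monotone h) {s t : ℝ} (hs : 0 ≤ s)
    (hst : s < t) (ht1 : t ≤ 1) {ℓ m : ℕ} {S U : Finset (Fin n)}
    (hSc : S ∈ Finset.powersetCard ℓ (Finset.univ : Finset (Fin n)))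
    (hUc : U ∈ Finset.powersetCard (m - ℓ) Sᶜ) :
    ℙ (CSet X g h s S ∩
        ⋂ i ∈ Sᶜ, X i ⁻¹' (if i ∈ U then Set.Ioc s t else Set.Ioi t)) =
      ℙ (CSet X g h s S) * ENNReal.ofReal (t - s) ^ (m - ℓ) *
        ENNReal.ofReal (1 - t) ^ ((n - ℓ) - (m - ℓ)) := by
  have hUsub : U ⊆ Sᶜ := (Finset.mem_powersetCard.1 hUc).1
  have hmeasA : ∀ i : Fin n,
      MeasurableSet (if i ∈ U then Set.Ioc s t else Set.Ioi t) := by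
    intro i
    by_cases hiU : i ∈ U
    · rw [if_pos hiU]; exact measurableSet_Ioc
    · rw [if_neg hiU]; exact measurableSet_Ioi
  rw [CSet_indep hXmeas hXindep hg hh hs S _ hmeasA, mul_assoc]
  congr 1
  have hcardSc : Sᶜ.card = n - ℓ := by
    rw [Finset.card_compl, (Finset.mem_powersetCard.1 hSc).2, Fintype.card_fin]
  have hcardU : U.card = m - ℓ := (Finset.mem_powersetCard.1 hUc).2
  rw [← Finset.prod_filter_mul_prod_filter_not Sᶜ (· ∈ U)]
  have h1 : Sᶜ.filter (· ∈ U) = U := by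
    ext i
    simp only [Finset.mem_filter]
    exact ⟨fun hi => hi.2, fun hi => ⟨hUsub hi, hi⟩⟩
  have h2 : Sᶜ.filter (· ∉ U) = Sᶜ \ U := by
    ext i
    simp [Finset.mem_sdiff]
  have h2card : (Sᶜ \ U).card = (n - ℓ) - (m - ℓ) := by
    rw [Finset.card_sdiff_of_subset hUsub, hcardSc, hcardU]
  congr 1
  · rw [h1, Finset.prod_congr rfl (fun i hi => ?_), Finset.prod_const, hcardU]
    rw [if_pos hi]
    exact prob_Ioc hXmeas hXunif i hs ht1
  · rw [h2, Finset.prod_congr rfl (fun i hi => ?_), Finset.prod_const, h2card]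
    rw [if_neg (Finset.mem_sdiff.1 hi).2]
    exact prob_Ioi hXmeas hXunif i (hs.trans (le_of_lt hst)) ht1

end Main3
section Main4
variable {Ω : Type*} [MeasureSpace Ω] [IsProbabilityMeasure (ℙ : Measure Ω)]
  {n : ℕ} {X : Fin n → Ω → ℝ}

lemma spec2 {g h : ℝ → ℝ} {s t : ℝ} (S U : Finset (Fin n)) (hUsub : U ⊆ Sᶜ) {ω : Ω}
    (hω : ω ∈ CSet X g h s S ∩
      ⋂ i ∈ Sᶜ, X i ⁻¹' (if i ∈ U then Set.Ioc s t else Set.Ioi t)) :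
    ∀ i, i ∈ U ↔ (s < X i ω ∧ X i ω ≤ t) := by
  intro i
  constructor
  · intro hiU
    have := Set.mem_iInter₂.1 hω.2 i (hUsub hiU)
    rw [Set.mem_preimage, if_pos hiU] at this
    exact this
  · rintro ⟨hgt, hle⟩
    by_contra hiU
    have hiSc : i ∈ Sᶜ := Finset.mem_compl.2 fun hiS =>
      absurd (hω.1.2 ⟨i, hiS⟩) (not_le.2 hgt)
    have := Set.mem_iInter₂.1 hω.2 i hiSc
    rw [Set.mem_preimage, if_neg hiU] at this
    exact absurd hle (not_le.2 this)

lemma measure_ESet (hXmeas : ∀ i, Measurable (X i))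
    (hXindep : iIndepFun X ℙ)
    (hXunif : ∀ i, Measure.map (X i) ℙ = (volume : Measure ℝ).restrict (Set.Icc 0 1))
    {g h : ℝ → ℝ} (hg : Monotone g) (hh : Monotone h) {s : ℝ} (hs : 0 ≤ s)
    (hs1 : s ≤ 1) (ℓ : ℕ) :
    ℙ (ESet X g h s ℓ) =
      (∑ S ∈ Finset.powersetCard ℓ (Finset.univ : Finset (Fin n)),
        ℙ (CSet X g h s S)) * ENNReal.ofReal (1 - s) ^ (n - ℓ) := by
  rw [ESet_eq_biUnion ℓ]
  rw [measure_biUnion_finset ?_ ?_]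
  · rw [Finset.sum_congr rfl (fun S hS => measure_piece1 hXmeas hXindep hXunif
      hg hh hs hs1 hS), ← Finset.sum_mul]
  · intro S1 h1 S2 h2 hne
    refine Set.disjoint_left.2 fun {ω} hω1 hω2 => hne ?_
    ext i
    rw [spec1 S1 (fun i => Set.Subset.refl _) hω1 i,
      ← spec1 S2 (fun i => Set.Subset.refl _) hω2 i]
  · intro S _
    exact (measurableSet_CSet hXmeas hg hh hs S).inter
      (Finset.measurableSet_biInter _ fun i _ => hXmeas i measurableSet_Ioi)

lemma measure_E2 (hXmeas : ∀ i, Measurable (X i))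
    (hXindep : iIndepFun X ℙ)
    (hXunif : ∀ i, Measure.map (X i) ℙ = (volume : Measure ℝ).restrict (Set.Icc 0 1))
    {g h : ℝ → ℝ} (hg : Monotone g) (hh : Monotone h) {s t : ℝ} (hs : 0 ≤ s)
    (hst : s < t) (ht1 : t ≤ 1) {ℓ m : ℕ} (hℓm : ℓ ≤ m) :
    ℙ {ω | NC g h s (fun i => X i ω) ∧ ecnt (fun i => X i ω) s = ℓ ∧
        ecnt (fun i => X i ω) t = m} =
      (∑ S ∈ Finset.powersetCard ℓ (Finset.univ : Finset (Fin n)),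
        ℙ (CSet X g h s S)) * ((n - ℓ).choose (m - ℓ) : ENNReal) *
        ENNReal.ofReal (t - s) ^ (m - ℓ) *
        ENNReal.ofReal (1 - t) ^ ((n - ℓ) - (m - ℓ)) := by
  have hAsub : ∀ (U : Finset (Fin n)) i,
      (if i ∈ U then Set.Ioc s t else Set.Ioi t) ⊆ Set.Ioi s := by
    intro U i x hx
    by_cases hiU : i ∈ U
    · rw [if_pos hiU] at hx; exact hx.1
    · rw [if_neg hiU] at hx; exact lt_trans hst hx
  have hmeasA : ∀ (U : Finset (Fin n)) (i : Fin n),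
      MeasurableSet (if i ∈ U then Set.Ioc s t else Set.Ioi t) := by
    intro U i
    by_cases hiU : i ∈ U
    · rw [if_pos hiU]; exact measurableSet_Ioc
    · rw [if_neg hiU]; exact measurableSet_Ioi
  have hmeaspiece : ∀ (S U : Finset (Fin n)), MeasurableSet (CSet X g h s S ∩
      ⋂ i ∈ Sᶜ, X i ⁻¹' (if i ∈ U then Set.Ioc s t else Set.Ioi t)) := by
    intro S U
    exact (measurableSet_CSet hXmeas hg hh hs S).inter
      (Finset.measurableSet_biInter _ fun i _ => hXmeas i (hmeasA U i))
  rw [E2_eq_biUnion hst hℓm]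
  rw [measure_biUnion_finset ?_ ?_]
  · have hinner : ∀ S ∈ Finset.powersetCard ℓ (Finset.univ : Finset (Fin n)),
        ℙ (⋃ U ∈ Finset.powersetCard (m - ℓ) Sᶜ, (CSet X g h s S ∩
          ⋂ i ∈ Sᶜ, X i ⁻¹' (if i ∈ U then Set.Ioc s t else Set.Ioi t))) =
        ℙ (CSet X g h s S) * ((n - ℓ).choose (m - ℓ) : ENNReal) *
          ENNReal.ofReal (t - s) ^ (m - ℓ) *
          ENNReal.ofReal (1 - t) ^ ((n - ℓ) - (m - ℓ)) := by
      intro S hS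
      rw [measure_biUnion_finset ?_ (fun U _ => hmeaspiece S U)]
      · rw [Finset.sum_congr rfl (fun U hU => measure_piece2 hXmeas hXindep hXunif
          hg hh hs hst ht1 hS hU), Finset.sum_const, Finset.card_powersetCard,
          Finset.card_compl, (Finset.mem_powersetCard.1 hS).2, Fintype.card_fin,
          nsmul_eq_mul]
        push_cast
        ring
      · intro U1 h1 U2 h2 hne
        refine Set.disjoint_left.2 fun {ω} hω1 hω2 => hne ?_
        ext i
        rw [spec2 S U1 (Finset.mem_powersetCard.1 h1).1 hω1 i,
          ← spec2 S U2 (Finset.mem_powersetCard.1 h2).1 hω2 i]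
    rw [Finset.sum_congr rfl hinner]
    rw [← Finset.sum_mul, ← Finset.sum_mul, ← Finset.sum_mul]
  · intro S1 h1 S2 h2 hne
    refine Set.disjoint_left.2 fun {ω} hω1 hω2 => hne ?_
    simp only [Set.mem_iUnion, exists_prop] at hω1 hω2
    obtain ⟨U1, hU1, hωp1⟩ := hω1
    obtain ⟨U2, hU2, hωp2⟩ := hω2
    ext i
    rw [spec1 S1 (hAsub U1) hωp1 i, ← spec1 S2 (hAsub U2) hωp2 i]
  · intro S _
    exact (Finset.powersetCard (m - ℓ) Sᶜ).measurableSet_biUnion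
      fun U _ => hmeaspiece S U

end Main4
section Main5
variable {Ω : Type*} [MeasureSpace Ω] [IsProbabilityMeasure (ℙ : Measure Ω)]
  {n : ℕ} {X : Fin n → Ω → ℝ}

lemma measurableSet_triple (hXmeas : ∀ i, Measurable (X i)) {g h : ℝ → ℝ}
    (hg : Monotone g) (hh : Monotone h) {s t : ℝ} (hs : 0 ≤ s) (ℓ m : ℕ) :
    MeasurableSet {ω | NC g h s (fun i => X i ω) ∧ ecnt (fun i => X i ω) s = ℓ ∧
      ecnt (fun i => X i ω) t = m} := by
  have hΦ : Measurable fun ω (i : Fin n) => X i ω :=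
    measurable_pi_lambda _ fun i => hXmeas i
  have heq : {ω | NC g h s (fun i => X i ω) ∧ ecnt (fun i => X i ω) s = ℓ ∧
      ecnt (fun i => X i ω) t = m} = (fun ω (i : Fin n) => X i ω) ⁻¹'
      ({y | NC g h s y} ∩ ((fun y : Fin n → ℝ => ecnt y s) ⁻¹' {ℓ} ∩
        ((fun y : Fin n → ℝ => ecnt y t) ⁻¹' {m}))) := rfl
  rw [heq]
  exact hΦ ((measurableSet_NC g h hg hh hs).inter
    (((measurable_ecnt s) (measurableSet_singleton ℓ)).inter
      ((measurable_ecnt t) (measurableSet_singleton m))))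

end Main5

/-- Chapman–Kolmogorov recursion for the non-crossing probabilities
`R(s,m)` of the scaled empirical CDF `n·F̂ₙ`, between consecutive integer-crossing
times `s < t` in `[0,1)`, with binomial transition probabilities
`Z_{ℓ} ~ Binomial(n−ℓ, (t−s)/(1−s))`. -/
theorem poisson_bcp_stmt14
    {Ω : Type*} [MeasureSpace Ω] [IsProbabilityMeasure (ℙ : Measure Ω)]
    (n : ℕ) (hn : 0 < n)
    (X : Fin n → Ω → ℝ) (hXmeas : ∀ i, Measurable (X i))
    (hXindep : iIndepFun X ℙ)
    (hXunif : ∀ i, Measure.map (X i) ℙ = (volume : Measure ℝ).restrict (Icc 0 1))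
    (g h : ℝ → ℝ) (hg : Monotone g) (hh : Monotone h)
    (hgh : ∀ t, g t < h t) (hg0 : g 0 < 0) (hh0 : 0 < h 0)
    (R : ℝ → ℕ → ENNReal)
    (hR : ∀ s m, R s m = ℙ {ω | (∀ u ∈ Icc (0:ℝ) s,
        g u < ((Finset.univ.filter fun i => X i ω ≤ u).card : ℝ) ∧
        ((Finset.univ.filter fun i => X i ω ≤ u).card : ℝ) < h u) ∧
        (Finset.univ.filter fun i => X i ω ≤ s).card = m})
    (s t : ℝ) (hs : 0 ≤ s) (hst : s < t) (ht : t < 1)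
    -- no integer crossing of g strictly between s and t
    (hgno : ∀ u, s < u → u < t → ∀ k : ℕ, g s < k → g u < k)
    -- no integer crossing of h strictly between s and t
    (hhno : ∀ u, s < u → u < t → ∀ k : ℕ, (k : ℝ) < h t → (k : ℝ) < h u)
    (m : ℕ) :
    (g t < m → (m : ℝ) < h t →
      R t m = ∑ ℓ ∈ Finset.range (m + 1),
        (if g s < (ℓ : ℝ) then
          R s ℓ * ENNReal.ofReal
            (((n - ℓ).choose (m - ℓ) : ℝ) * ((t - s) / (1 - s)) ^ (m - ℓ) *
              (1 - (t - s) / (1 - s)) ^ ((n - ℓ) - (m - ℓ)))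
         else 0)) ∧
    (¬ (g t < m ∧ (m : ℝ) < h t) → R t m = 0) := by
  have h0t : (0:ℝ) ≤ t := hs.trans hst.le
  have hRE : ∀ r k, R r k = ℙ (ESet X g h r k) := fun r k => hR r k
  constructor
  · intro hgt hht
    -- Step A: no crossing between s and t lets us relax `NC _ _ t` to `NC _ _ s`
    have hA : ESet X g h t m = {ω | NC g h s (fun i => X i ω) ∧
        ecnt (fun i => X i ω) t = m} := by
      ext ω
      simp only [ESet, Set.mem_setOf_eq]
      constructor
      · rintro ⟨hNC, hct⟩
        exact ⟨fun u hu => hNC u ⟨hu.1, hu.2.trans hst.le⟩, hct⟩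
      · rintro ⟨hNC, hct⟩
        refine ⟨fun u hu => ?_, hct⟩
        rcases le_or_gt u s with hus | hsu
        · exact hNC u ⟨hu.1, hus⟩
        rcases eq_or_lt_of_le hu.2 with rfl | hut
        · exact ⟨by rw [hct]; exact hgt, by rw [hct]; exact hht⟩
        · have hcnt_ge : ecnt (fun i => X i ω) s ≤ ecnt (fun i => X i ω) u :=
            ecnt_mono _ (le_of_lt hsu)
          have hcnt_le : ecnt (fun i => X i ω) u ≤ m := hct ▸ ecnt_mono _ hu.2
          have hgs := (hNC s ⟨hs, le_refl s⟩).1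
          constructor
          · exact hgno u hsu hut _ (lt_of_lt_of_le hgs (Nat.cast_le.2 hcnt_ge))
          · refine hhno u hsu hut _ (lt_of_le_of_lt ?_ hht)
            exact_mod_cast hcnt_le
    -- Step B: partition according to the count at time s
    have hB : {ω | NC g h s (fun i => X i ω) ∧ ecnt (fun i => X i ω) t = m} =
        ⋃ ℓ ∈ Finset.range (m+1), {ω | NC g h s (fun i => X i ω) ∧
          ecnt (fun i => X i ω) s = ℓ ∧ ecnt (fun i => X i ω) t = m} := by
      ext ω
      simp only [Set.mem_iUnion, exists_prop, Set.mem_setOf_eq, Finset.mem_range]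
      constructor
      · rintro ⟨hNC, hct⟩
        refine ⟨ecnt (fun i => X i ω) s, ?_, hNC, rfl, hct⟩
        have := ecnt_mono (fun i => X i ω) hst.le
        omega
      · rintro ⟨ℓ, _, hNC, _, hct⟩; exact ⟨hNC, hct⟩
    rw [hRE t m, hA, hB, measure_biUnion_finset ?_ ?_]
    · refine Finset.sum_congr rfl fun ℓ hℓ => ?_
      have hℓm : ℓ ≤ m := by
        have := Finset.mem_range.1 hℓ; omega
      by_cases hgsℓ : g s < (ℓ:ℝ)
      · rw [if_pos hgsℓ, measure_E2 hXmeas hXindep hXunif hg hh hs hst ht.le hℓm,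
          hRE s ℓ, measure_ESet hXmeas hXindep hXunif hg hh hs
            (by linarith : s ≤ 1) ℓ]
        -- arithmetic
        have hs1 : (0:ℝ) ≤ 1 - s := by linarith
        have hts : (0:ℝ) ≤ t - s := by linarith
        have h1t : (0:ℝ) ≤ 1 - t := by linarith
        have hsne : (1:ℝ) - s ≠ 0 := by linarith
        have hp : (0:ℝ) ≤ (t-s)/(1-s) := div_nonneg hts hs1
        have h1p : 1 - (t-s)/(1-s) = (1-t)/(1-s) := by field_simp; ring
        by_cases hch : m - ℓ ≤ n - ℓ
        · have hreal : (1-s)^(n-ℓ) * (((n-ℓ).choose (m-ℓ) : ℝ) *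
              ((t-s)/(1-s))^(m-ℓ) * (1 - (t-s)/(1-s))^((n-ℓ)-(m-ℓ))) =
              ((n-ℓ).choose (m-ℓ) : ℝ) *
                ((t-s)^(m-ℓ) * (1-t)^((n-ℓ)-(m-ℓ))) := by
            rw [h1p, div_pow, div_pow]
            have hnl : n - ℓ = (m-ℓ) + ((n-ℓ)-(m-ℓ)) := by omega
            rw [hnl, pow_add]
            simp only [Nat.add_sub_cancel_left]
            field_simp
          have key : (ℙ (ESet X g h s ℓ)) = ℙ (ESet X g h s ℓ) := rfl
          have := calc
            (∑ S ∈ Finset.powersetCard ℓ (Finset.univ : Finset (Fin n)),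
                ℙ (CSet X g h s S)) * ENNReal.ofReal (1 - s) ^ (n - ℓ) *
              ENNReal.ofReal (((n - ℓ).choose (m - ℓ) : ℝ) *
                ((t - s) / (1 - s)) ^ (m - ℓ) *
                (1 - (t - s) / (1 - s)) ^ ((n - ℓ) - (m - ℓ)))
              = (∑ S ∈ Finset.powersetCard ℓ (Finset.univ : Finset (Fin n)),
                ℙ (CSet X g h s S)) * ENNReal.ofReal ((1 - s) ^ (n - ℓ) *
                  (((n - ℓ).choose (m - ℓ) : ℝ) * ((t - s) / (1 - s)) ^ (m - ℓ) *
                  (1 - (t - s) / (1 - s)) ^ ((n - ℓ) - (m - ℓ)))) := by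
                rw [ENNReal.ofReal_mul (pow_nonneg hs1 _), mul_assoc,
                  ENNReal.ofReal_pow hs1]
            _ = (∑ S ∈ Finset.powersetCard ℓ (Finset.univ : Finset (Fin n)),
                ℙ (CSet X g h s S)) * (((n - ℓ).choose (m - ℓ) : ENNReal) *
                  (ENNReal.ofReal (t - s) ^ (m - ℓ) *
                   ENNReal.ofReal (1 - t) ^ ((n - ℓ) - (m - ℓ)))) := by
                rw [hreal, ENNReal.ofReal_mul (Nat.cast_nonneg _),
                  ENNReal.ofReal_mul (pow_nonneg hts _),
                  ENNReal.ofReal_pow hts, ENNReal.ofReal_pow h1t,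
                  ENNReal.ofReal_natCast]
          rw [this]
          ring
        · have hch0 : (n - ℓ).choose (m - ℓ) = 0 :=
            Nat.choose_eq_zero_of_lt (by omega)
          rw [hch0]
          simp
      · rw [if_neg hgsℓ]
        have hempty : {ω | NC g h s (fun i => X i ω) ∧
            ecnt (fun i => X i ω) s = ℓ ∧ ecnt (fun i => X i ω) t = m} = ∅ := by
          ext ω
          simp only [Set.mem_setOf_eq, Set.mem_empty_iff_false, iff_false, not_and]
          intro hNC hcs _
          exact hgsℓ (hcs ▸ (hNC s ⟨hs, le_refl s⟩).1)
        rw [hempty, measure_empty]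
    · intro ℓ1 h1 ℓ2 h2 hne
      refine Set.disjoint_left.2 fun {ω} hω1 hω2 => hne ?_
      rw [← hω1.2.1, ← hω2.2.1]
    · intro ℓ _
      exact measurableSet_triple hXmeas hg hh hs ℓ m
  · intro hcon
    rw [hRE t m]
    refine measure_mono_null (fun ω hω => ?_) measure_empty
    exfalso
    apply hcon
    have h1 := hω.1 t ⟨h0t, le_refl t⟩
    rw [hω.2] at h1
    exact h1
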